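/- In the game G_0 determined by bilinear forms q_1,…,q_ℓ, if Player 1 plays the uniform distribution z on S_1 = {1,−1}×{1,…,ℓ}, then for all mixed strategies x,y of Players 2 and 3, u_1(z,x,y) = u_2(z,x,y) = u_3(z,x,y) = 0. Consequently, every Nash equilibrium payoff profile of G_0 is of the form (2u,−u,−u) with u ≥ 0. -/

import Mathlib

open Finset

noncomputable section

/-- The sign associated to `s ∈ {1,−1}`, with `true` = +1 and `false` = −1. -/
def sgn (s : Bool) : ℝ := if s then 1 else -1

/-- A mixed strategy: a probability distribution on a finite action set. -/
def IsDist {α : Type*} [Fintype α] (x : α → ℝ) : Prop :=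
  (∀ i, 0 ≤ x i) ∧ ∑ i, x i = 1

variable {n ℓ : ℕ}

/-- The homogeneous bilinear form `q_k(x,y) = Σ_{i,j} a_{ij}^{(k)} x_i y_j`. -/
def qform (a : Fin ℓ → Fin (n+1) → Fin (n+1) → ℤ) (k : Fin ℓ)
    (x y : Fin (n+1) → ℝ) : ℝ :=
  ∑ i, ∑ j, (a k i j : ℝ) * x i * y j

/-- Payoff to Player 1 in the game G₀ on the pure profile ((s,k),i,j). -/
def pay1 (a : Fin ℓ → Fin (n+1) → Fin (n+1) → ℤ)
    (sk : Bool × Fin ℓ) (i j : Fin (n+1)) : ℝ :=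
  2 * sgn sk.1 * (a sk.2 i j : ℝ)

/-- Payoff to Player 2 (and to Player 3) in G₀ on the pure profile ((s,k),i,j). -/
def pay23 (a : Fin ℓ → Fin (n+1) → Fin (n+1) → ℤ)
    (sk : Bool × Fin ℓ) (i j : Fin (n+1)) : ℝ :=
  -(sgn sk.1 * (a sk.2 i j : ℝ))

/-- Expected payoff in G₀ for a payoff table `f` under a mixed profile (z,x,y). -/
def Eg (f : Bool × Fin ℓ → Fin (n+1) → Fin (n+1) → ℝ)
    (z : Bool × Fin ℓ → ℝ) (x y : Fin (n+1) → ℝ) : ℝ :=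
  ∑ sk, ∑ i, ∑ j, z sk * x i * y j * f sk i j

/-- `(z,x,y)` is a (mixed) Nash equilibrium of the zero-sum game G₀. -/
def G0NE (a : Fin ℓ → Fin (n+1) → Fin (n+1) → ℤ)
    (z : Bool × Fin ℓ → ℝ) (x y : Fin (n+1) → ℝ) : Prop :=
  IsDist z ∧ IsDist x ∧ IsDist y ∧
  (∀ z', IsDist z' → Eg (pay1 a) z' x y ≤ Eg (pay1 a) z x y) ∧
  (∀ x', IsDist x' → Eg (pay23 a) z x' y ≤ Eg (pay23 a) z x y) ∧
  (∀ y', IsDist y' → Eg (pay23 a) z x y' ≤ Eg (pay23 a) z x y)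

/-- The uniform distribution on Player 1's action set {1,−1}×{1,…,ℓ}. -/
def unif (ℓ : ℕ) : Bool × Fin ℓ → ℝ := fun _ => 1 / (2 * ℓ)

end

/-- If Player 1 plays the uniform distribution on {1,−1}×{1,…,ℓ}, all players get
payoff 0 against any mixed strategies x,y. Consequently every Nash equilibrium
payoff profile of G₀ is of the form (2u,−u,−u) with u ≥ 0. -/
theorem stmt12 {n ℓ : ℕ} (hℓ : 0 < ℓ) (a : Fin ℓ → Fin (n+1) → Fin (n+1) → ℤ) :
    (∀ x y : Fin (n+1) → ℝ, IsDist x → IsDist y →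
      Eg (pay1 a) (unif ℓ) x y = 0 ∧ Eg (pay23 a) (unif ℓ) x y = 0) ∧
    (∀ (z : Bool × Fin ℓ → ℝ) (x y : Fin (n+1) → ℝ), G0NE a z x y →
      ∃ u : ℝ, 0 ≤ u ∧ Eg (pay1 a) z x y = 2 * u ∧ Eg (pay23 a) z x y = -u) := by

  have h23 : ∀ (z : Bool × Fin ℓ → ℝ) (x y : Fin (n+1) → ℝ),
      Eg (pay23 a) z x y = -(1/2) * Eg (pay1 a) z x y := by
    intro z x y
    simp only [Eg, pay1, pay23, Finset.mul_sum]
    refine Finset.sum_congr rfl fun sk _ => Finset.sum_congr rfl fun i _ =>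
      Finset.sum_congr rfl fun j _ => ?_
    ring
  have h1 : ∀ x y : Fin (n+1) → ℝ, Eg (pay1 a) (unif ℓ) x y = 0 := by
    intro x y
    simp only [Eg, Fintype.sum_prod_type, Fintype.sum_bool, ← Finset.sum_add_distrib]
    apply Finset.sum_eq_zero
    intro k _
    apply Finset.sum_eq_zero
    intro i _
    apply Finset.sum_eq_zero
    intro j _
    simp [pay1, sgn, unif]
  have hud : IsDist (unif ℓ) := by
    constructor
    · intro i
      unfold unif
      positivity
    · simp only [unif, Finset.sum_const, Finset.card_univ, Fintype.card_prod,
        Fintype.card_bool, Fintype.card_fin, nsmul_eq_mul]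
      field_simp
      push_cast
      ring
  refine ⟨fun x y _ _ => ⟨h1 x y, by rw [h23, h1]; ring⟩, ?_⟩
  intro z x y hne
  obtain ⟨hz, hx, hy, hP1, _, _⟩ := hne
  have hge : 0 ≤ Eg (pay1 a) z x y := by
    have := hP1 (unif ℓ) hud
    rw [h1 x y] at this
    exact this
  exact ⟨Eg (pay1 a) z x y / 2, by positivity, by ring, by rw [h23]; ring⟩
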